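/- For every y ∈ [0, ψ_max), ρ⁻¹(y·μ⁻¹(y)) = k_c·y/(ψ_max − y), where ψ_max = μ_max·ρ_max/(ρ_max + q_min·μ_max) and k_c = k_v·q_min·μ_max/(ρ_max + q_min·μ_max); in other words, the function ψ defined by ψ⁻¹(y) = ρ⁻¹(y·μ⁻¹(y)) is the Monod function ψ(v) = ψ_max·v/(k_c + v). Moreover ψ_max < μ_max. -/
import Mathlib


/-- The vitamin uptake rate `ρ(v) = ρmax·v/(kv+v)`. -/
noncomputable def rho (rhomax kv v : ℝ) : ℝ := rhomax * v / (kv + v)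

/-- The algal growth rate `μ(q) = μmax·(1 − qmin/q)`. -/
noncomputable def mufun (mumax qmin q : ℝ) : ℝ := mumax * (1 - qmin / q)

/-- `ψmax = μmax·ρmax/(ρmax + qmin·μmax)`. -/
noncomputable def psiMax (rhomax mumax qmin : ℝ) : ℝ :=
  mumax * rhomax / (rhomax + qmin * mumax)

/-- `k_c = kv·qmin·μmax/(ρmax + qmin·μmax)`. -/
noncomputable def kC (rhomax kv mumax qmin : ℝ) : ℝ :=
  kv * qmin * mumax / (rhomax + qmin * mumax)

/-- For every `y ∈ [0, ψmax)`, `ρ⁻¹(y·μ⁻¹(y)) = k_c·y/(ψmax − y)`: the function `ψ` defined by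
`ψ⁻¹(y) = ρ⁻¹(y·μ⁻¹(y))` is the Monod function `ψ(v) = ψmax·v/(k_c + v)`.
Moreover `ψmax < μmax`. Here `ρ⁻¹` is the inverse of `ρ` on `[0, ρmax)` (characterized by
taking values in `[0,∞)` and `ρ ∘ ρ⁻¹ = id`), and `μ⁻¹` is the inverse of `μ` on `[0, μmax)`
(characterized by taking values in `[qmin,∞)` and `μ ∘ μ⁻¹ = id`). -/
theorem psi_is_monod (rhomax kv mumax qmin : ℝ)
    (hrho : 0 < rhomax) (hkv : 0 < kv) (hmu : 0 < mumax) (hqmin : 0 < qmin)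
    (rhoInv muInv : ℝ → ℝ)
    (hrhoInv : ∀ x ∈ Set.Ico (0:ℝ) rhomax, 0 ≤ rhoInv x ∧ rho rhomax kv (rhoInv x) = x)
    (hmuInv : ∀ y ∈ Set.Ico (0:ℝ) mumax, qmin ≤ muInv y ∧ mufun mumax qmin (muInv y) = y) :
    (∀ y ∈ Set.Ico (0:ℝ) (psiMax rhomax mumax qmin),
        rhoInv (y * muInv y) =
          kC rhomax kv mumax qmin * y / (psiMax rhomax mumax qmin - y)) ∧
    psiMax rhomax mumax qmin < mumax := by

  have hD : 0 < rhomax + qmin * mumax := by positivity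
  have hpsi_lt : psiMax rhomax mumax qmin < mumax := by
    rw [psiMax, div_lt_iff₀ hD]; nlinarith [mul_pos hmu (mul_pos hqmin hmu)]
  refine ⟨?_, hpsi_lt⟩
  intro y hy
  obtain ⟨hy0, hy1⟩ := hy
  have hymu : y < mumax := hy1.trans hpsi_lt
  obtain ⟨hq1, hq2⟩ := hmuInv y ⟨hy0, hymu⟩
  set q := muInv y with hqdef
  have hq0 : 0 < q := lt_of_lt_of_le hqmin hq1
  rw [mufun] at hq2
  have eq1 : mumax * q - mumax * qmin - y * q = 0 := by
    field_simp at hq2; nlinarith [hq2]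
  have hyD : y * (rhomax + qmin * mumax) < mumax * rhomax := by
    have := hy1; rw [psiMax, lt_div_iff₀ hD] at this; linarith
  have hmy : 0 < mumax - y := by linarith
  have hxlt : y * q < rhomax := by nlinarith
  have hx0 : 0 ≤ y * q := by positivity
  obtain ⟨hv1, hv2⟩ := hrhoInv (y * q) ⟨hx0, hxlt⟩
  set v := rhoInv (y * q) with hvdef
  rw [rho] at hv2
  have hkvv : 0 < kv + v := by linarith
  have eq2 : rhomax * v - y * q * kv - y * q * v = 0 := by
    field_simp at hv2; nlinarith [hv2]
  have key : v * (mumax * rhomax - y * (rhomax + qmin * mumax)) = kv * qmin * mumax * y := by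
    linear_combination (mumax - y) * eq2 + (y * kv + y * v) * eq1
  rw [kC, psiMax]
  have hden : 0 < mumax * rhomax / (rhomax + qmin * mumax) - y := by
    rw [psiMax] at hy1; linarith
  rw [eq_div_iff (ne_of_gt hden)]
  field_simp
  linear_combination key
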